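/- The number of binary sequences (a₁,…,a_{n+2l}) ∈ {0,1}^{n+2l} such that a₁ = 1, exactly n entries equal 1 and exactly 2l entries equal 0, and every maximal cyclic run of consecutive 0's (viewing the sequence as arranged on a circle) has even length, equals the binomial coefficient C(n+l-1, n-1). -/

import Mathlib

namespace Stmt11Aux

/-- `pos c j` = starting position of the `j`-th block, where block `m` has
length 1 if `c m = true` and length 2 if `c m = false`. -/
def pos (c : ℕ → Bool) : ℕ → ℕ
  | 0 => 0
  | j+1 => pos c j + (bif c j then 1 else 2)

lemma pos_zero (c : ℕ → Bool) : pos c 0 = 0 := rfl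

lemma pos_succ (c : ℕ → Bool) (j : ℕ) :
    pos c (j+1) = pos c j + (bif c j then 1 else 2) := rfl

lemma pos_lt_succ (c : ℕ → Bool) (j : ℕ) : pos c j < pos c (j+1) := by
  rw [pos_succ]; cases c j <;> simp

lemma pos_succ_le (c : ℕ → Bool) (j : ℕ) : pos c (j+1) ≤ pos c j + 2 := by
  rw [pos_succ]; cases c j <;> simp

lemma pos_mono (c : ℕ → Bool) : StrictMono (pos c) :=
  strictMono_nat_of_lt_succ (pos_lt_succ c)

lemma le_pos (c : ℕ → Bool) (j : ℕ) : j ≤ pos c j := by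
  induction j with
  | zero => simp [pos_zero]
  | succ j ih => have := pos_lt_succ c j; omega

lemma pos_add_count (c : ℕ → Bool) (j : ℕ) :
    pos c j + ((Finset.range j).filter (fun m => c m = true)).card = 2 * j := by
  induction j with
  | zero => simp [pos_zero]
  | succ j ih =>
    rw [pos_succ, Finset.range_add_one, Finset.filter_insert]
    cases h : c j
    · simp only [Bool.false_eq_true, if_false, cond_false]
      omega
    · rw [if_pos rfl, Finset.card_insert_of_notMem (by simp)]
      simp only [cond_true]
      omega

lemma pos_congr {c₁ c₂ : ℕ → Bool} (j : ℕ) (h : ∀ m, m < j → c₁ m = c₂ m) :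
    pos c₁ j = pos c₂ j := by
  induction j with
  | zero => rfl
  | succ j ih =>
    rw [pos_succ, pos_succ, ih (fun m hm => h m (by omega)), h j (by omega)]

lemma pos_gap (c : ℕ → Bool) (j : ℕ) (hj : c j = true) :
    ∀ d, 0 < d → (∀ m, 0 < m → m < d → c (j + m) = false) →
      pos c (j + d) = pos c j + (2 * d - 1) := by
  intro d
  induction d with
  | zero => omega
  | succ d ih =>
    intro _ h
    rcases Nat.eq_zero_or_pos d with h0 | hd
    · subst h0
      rw [pos_succ, hj]
      simp
    · have h1 : pos c (j + d) = pos c j + (2 * d - 1) :=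
        ih hd (fun m hm1 hm2 => h m hm1 (by omega))
      have hcf : c (j + d) = false := h d hd (by omega)
      rw [show j + (d+1) = (j+d)+1 by omega, pos_succ, hcf, h1]
      simp only [cond_false]
      omega

lemma pos_cover (c : ℕ → Bool) (i : ℕ) : ∃ j, pos c j ≤ i ∧ i < pos c (j+1) := by
  induction i with
  | zero => exact ⟨0, by simp [pos_zero], by have := pos_lt_succ c 0; simp [pos_zero] at this ⊢; omega⟩
  | succ i ih =>
    obtain ⟨j, h1, h2⟩ := ih
    by_cases h : i + 1 < pos c (j+1)
    · exact ⟨j, by omega, h⟩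
    · exact ⟨j+1, by omega, by have := pos_lt_succ c (j+1); omega⟩

lemma pos_period {c : ℕ → Bool} {M N : ℕ} (hc : ∀ m, c (m + M) = c m)
    (hM : pos c M = N) : ∀ j, pos c (j + M) = pos c j + N := by
  intro j
  induction j with
  | zero => simpa [pos_zero] using hM
  | succ j ih =>
    rw [show j + 1 + M = (j + M) + 1 by omega, pos_succ, pos_succ, ih, hc]
    omega

lemma pos_add_mul {c : ℕ → Bool} {M N : ℕ} (hc : ∀ m, c (m + M) = c m)
    (hM : pos c M = N) : ∀ q r, pos c (r + q * M) = pos c r + q * N := by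
  intro q
  induction q with
  | zero => simp
  | succ q ih =>
    intro r
    rw [show r + (q+1) * M = (r + q * M) + M by ring, pos_period hc hM, ih]
    ring

/-- `tp b j`: position reached after reading `j` blocks of the (long) sequence `b`,
where a block starting at `i` has length 1 if `b i = true` and 2 otherwise. -/
def tp (b : ℕ → Bool) : ℕ → ℕ
  | 0 => 0
  | j+1 => tp b j + (bif b (tp b j) then 1 else 2)

lemma tp_zero (b : ℕ → Bool) : tp b 0 = 0 := rfl

lemma tp_succ (b : ℕ → Bool) (j : ℕ) :
    tp b (j+1) = tp b j + (bif b (tp b j) then 1 else 2) := rfl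

lemma pos_tp (b : ℕ → Bool) (j : ℕ) : pos (fun m => b (tp b m)) j = tp b j := by
  induction j with
  | zero => rfl
  | succ j ih => rw [pos_succ, ih, tp_succ]

lemma tp_lt_succ (b : ℕ → Bool) (j : ℕ) : tp b j < tp b (j+1) := by
  rw [tp_succ]; cases b (tp b j) <;> simp

lemma le_tp (b : ℕ → Bool) (j : ℕ) : j ≤ tp b j := by
  induction j with
  | zero => simp [tp_zero]
  | succ j ih => have := tp_lt_succ b j; omega


lemma tp_mono (b : ℕ → Bool) : StrictMono (tp b) :=
  strictMono_nat_of_lt_succ (tp_lt_succ b)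

section Seq
variable {N : ℕ} {b : ℕ → Bool}

lemma pair_step (hN : 0 < N) (hper : ∀ i, b (i + N) = b i)
    (hGO : ∀ i k, b i = true → 0 < k → (∀ m, 0 < m → m < k → b (i + m) = false) →
      b (i + k) = true → Odd k)
    (p d : ℕ) (hp : b p = true) (hd : Odd d)
    (hfa : ∀ m, 0 < m → m ≤ d → b (p + m) = false) :
    b (p + d + 1) = false := by
  classical
  have hex : ∃ k, 0 < k ∧ b (p + k) = true := ⟨N, hN, by rw [hper]; exact hp⟩
  obtain ⟨hk0, hkt⟩ := Nat.find_spec hex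
  set k := Nat.find hex with hkdef
  have hmin : ∀ m, 0 < m → m < k → b (p + m) = false := by
    intro m hm0 hmk
    by_contra h
    have h' : b (p + m) = true := by
      cases hpm : b (p + m) <;> simp_all
    have hle : k ≤ m := Nat.find_le ⟨hm0, h'⟩
    omega
  have hodd : Odd k := hGO p k hp hk0 hmin hkt
  have hdk : d < k := by
    by_contra h
    push_neg at h
    rw [hfa k hk0 h] at hkt
    simp at hkt
  have hd1 : d + 1 < k := by
    rw [Nat.odd_iff] at hd hodd; omega
  have := hmin (d+1) (by omega) hd1
  rwa [← Nat.add_assoc] at this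

lemma tp_inv (hN : 0 < N) (hper : ∀ i, b (i + N) = b i)
    (hGO : ∀ i k, b i = true → 0 < k → (∀ m, 0 < m → m < k → b (i + m) = false) →
      b (i + k) = true → Odd k)
    (h0 : b 0 = true) :
    ∀ j, b (tp b j) = true ∨
      ∃ p, b p = true ∧ p < tp b j ∧ Odd (tp b j - p) ∧
        ∀ m, p < m → m ≤ tp b j → b m = false := by
  intro j
  induction j with
  | zero => left; simpa [tp_zero] using h0
  | succ j ih =>
    rcases ih with ht | ⟨p, hp, hplt, hpo, hpf⟩
    · have hstep : tp b (j+1) = tp b j + 1 := by rw [tp_succ, ht]; rfl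
      by_cases h1 : b (tp b j + 1) = true
      · left; rw [hstep]; exact h1
      · right
        refine ⟨tp b j, ht, by omega, by rw [hstep]; simp [Nat.odd_iff], ?_⟩
        intro m hm1 hm2
        rw [hstep] at hm2
        have : m = tp b j + 1 := by omega
        subst this
        cases hb : b (tp b j + 1) <;> simp_all
    · have hbf : b (tp b j) = false := hpf _ hplt (le_refl _)
      have hstep : tp b (j+1) = tp b j + 2 := by rw [tp_succ, hbf]; rfl
      have hnext : b (tp b j + 1) = false := by
        have h := pair_step hN hper hGO p (tp b j - p) hp hpo
          (fun m hm0 hmd => hpf (p + m) (by omega) (by omega))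
        rwa [show p + (tp b j - p) = tp b j by omega] at h
      by_cases h2 : b (tp b j + 2) = true
      · left; rw [hstep]; exact h2
      · right
        refine ⟨p, hp, by omega, ?_, ?_⟩
        · rw [hstep]; rw [Nat.odd_iff] at hpo ⊢; omega
        · intro m hm1 hm2
          rw [hstep] at hm2
          rcases show m ≤ tp b j ∨ m = tp b j + 1 ∨ m = tp b j + 2 by omega with h | h | h
          · exact hpf m hm1 h
          · subst h; exact hnext
          · subst h; cases hb : b (tp b j + 2) <;> simp_all

lemma tp_pair (hN : 0 < N) (hper : ∀ i, b (i + N) = b i)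
    (hGO : ∀ i k, b i = true → 0 < k → (∀ m, 0 < m → m < k → b (i + m) = false) →
      b (i + k) = true → Odd k)
    (h0 : b 0 = true) :
    ∀ j, b (tp b j) = false → b (tp b j + 1) = false := by
  intro j hj
  rcases tp_inv hN hper hGO h0 j with ht | ⟨p, hp, hplt, hpo, hpf⟩
  · rw [ht] at hj; cases hj
  · have h := pair_step hN hper hGO p (tp b j - p) hp hpo
      (fun m hm0 hmd => hpf (p + m) (by omega) (by omega))
    rwa [show p + (tp b j - p) = tp b j by omega] at h

lemma tp_hits (hN : 0 < N) (hper : ∀ i, b (i + N) = b i)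
    (hGO : ∀ i k, b i = true → 0 < k → (∀ m, 0 < m → m < k → b (i + m) = false) →
      b (i + k) = true → Odd k)
    (h0 : b 0 = true) :
    ∃ J, 0 < J ∧ tp b J = N := by
  classical
  have hex : ∃ j, N ≤ tp b j := ⟨N, le_tp b N⟩
  have hJspec : N ≤ tp b (Nat.find hex) := Nat.find_spec hex
  set J := Nat.find hex with hJdef
  have hJ0 : 0 < J := by
    rcases Nat.eq_zero_or_pos J with h | h
    · rw [h, tp_zero] at hJspec; omega
    · exact h
  have hlt : tp b (J-1) < N := by
    have := Nat.find_min hex (show J - 1 < J by omega)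
    omega
  refine ⟨J, hJ0, ?_⟩
  have hstep := tp_succ b (J-1)
  rw [show J - 1 + 1 = J by omega] at hstep
  cases hb : b (tp b (J-1))
  · rw [hb] at hstep
    simp only [cond_false] at hstep
    rcases show tp b (J-1) = N - 1 ∨ tp b J = N by omega with h | h
    · exfalso
      have hpair := tp_pair hN hper hGO h0 (J-1) hb
      rw [h, show N - 1 + 1 = N by omega] at hpair
      have hbN : b N = true := by
        have := hper 0
        rw [Nat.zero_add] at this
        rw [this]; exact h0
      rw [hbN] at hpair; cases hpair
    · exact h
  · rw [hb] at hstep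
    simp only [cond_true] at hstep
    omega

end Seq

def acnt (b : ℕ → Bool) (i : ℕ) : ℕ := ((Finset.range i).filter (fun m => b m = true)).card

lemma acnt_succ (b : ℕ → Bool) (i : ℕ) :
    acnt b (i+1) = acnt b i + (if b i = true then 1 else 0) := by
  unfold acnt
  rw [Finset.range_add_one, Finset.filter_insert]
  cases h : b i
  · simp
  · rw [if_pos rfl, if_pos rfl, Finset.card_insert_of_notMem (by simp)]

lemma acnt_tp {b : ℕ → Bool}
    (HP : ∀ j, b (tp b j) = false → b (tp b j + 1) = false) (j : ℕ) :
    acnt b (tp b j) = acnt (fun m => b (tp b m)) j := by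
  induction j with
  | zero => rfl
  | succ j ih =>
    cases hb : b (tp b j)
    · have hstep : tp b (j+1) = tp b j + 2 := by rw [tp_succ, hb]; rfl
      have h1 := HP j hb
      rw [hstep, show tp b j + 2 = (tp b j + 1) + 1 by omega,
        acnt_succ, acnt_succ, acnt_succ, h1, hb, ih]
      simp
    · have hstep : tp b (j+1) = tp b j + 1 := by rw [tp_succ, hb]; rfl
      rw [hstep, acnt_succ, acnt_succ, hb, ih]


def perF {N : ℕ} (a : Fin N → Bool) : ℕ → Bool :=
  fun i => if h : i % N < N then a ⟨i % N, h⟩ else false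

lemma perF_lt {N : ℕ} (a : Fin N → Bool) {i : ℕ} (h : i < N) :
    perF a i = a ⟨i, h⟩ := by
  unfold perF
  rw [Nat.mod_eq_of_lt h, dif_pos h]

lemma perF_eq {N : ℕ} (hN : 0 < N) (a : Fin N → Bool) (i : ℕ) :
    perF a i = a ⟨i % N, Nat.mod_lt _ hN⟩ := by
  unfold perF
  rw [dif_pos (Nat.mod_lt _ hN)]

lemma perF_congr_mod {N : ℕ} (a : Fin N → Bool) {i j : ℕ} (h : i % N = j % N) :
    perF a i = perF a j := by
  unfold perF
  rw [h]

lemma perF_period {N : ℕ} (a : Fin N → Bool) (i : ℕ) :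
    perF a (i + N) = perF a i :=
  perF_congr_mod a (Nat.add_mod_right i N)

lemma perF_mod {N : ℕ} (a : Fin N → Bool) (i : ℕ) :
    perF a (i % N) = perF a i :=
  perF_congr_mod a (Nat.mod_mod_of_dvd i dvd_rfl)


open Classical in
noncomputable def EmapF (n l : ℕ) (c : Fin (n + l) → Bool) : Fin (n + 2 * l) → Bool :=
  fun i => decide (∃ j, j < n + l ∧ pos (perF c) j = i.1 ∧ perF c j = true)

section Exp
variable {n l : ℕ} (c : Fin (n + l) → Bool)

lemma posM (hn : 1 ≤ n) (hl : 1 ≤ l) (hccnt : acnt (perF c) (n + l) = n) :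
    pos (perF c) (n + l) = n + 2 * l := by
  have h := pos_add_count (perF c) (n + l)
  unfold acnt at hccnt
  omega

lemma pos_mod (hn : 1 ≤ n) (hl : 1 ≤ l) (hccnt : acnt (perF c) (n + l) = n) (j : ℕ) :
    pos (perF c) j % (n + 2 * l) = pos (perF c) (j % (n + l)) ∧
      pos (perF c) (j % (n + l)) < n + 2 * l := by
  have hM0 : 0 < n + l := by omega
  have hpM := posM c hn hl hccnt
  have hj : j % (n + l) + j / (n + l) * (n + l) = j := Nat.mod_add_div' j (n + l)
  have h1 : pos (perF c) j
      = pos (perF c) (j % (n + l)) + j / (n + l) * (n + 2 * l) := by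
    conv_lhs => rw [← hj]
    exact pos_add_mul (perF_period c) hpM _ _
  have hrlt : j % (n + l) < n + l := Nat.mod_lt _ hM0
  have h2 : pos (perF c) (j % (n + l)) < n + 2 * l := by
    have := pos_mono (perF c) hrlt
    omega
  refine ⟨?_, h2⟩
  rw [h1, Nat.add_mul_mod_self_right, Nat.mod_eq_of_lt h2]

lemma E_eval (hn : 1 ≤ n) (hl : 1 ≤ l) (hccnt : acnt (perF c) (n + l) = n) (j : ℕ) :
    perF (EmapF n l c) (pos (perF c) j) = perF c j := by
  have hN0 : 0 < n + 2 * l := by omega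
  obtain ⟨h1, h2⟩ := pos_mod c hn hl hccnt j
  have hcr : perF c (j % (n + l)) = perF c j := perF_mod c j
  rw [perF_eq hN0]
  show decide (∃ j', j' < n + l ∧ pos (perF c) j' = pos (perF c) j % (n + 2 * l)
    ∧ perF c j' = true) = perF c j
  by_cases hcj : perF c j = true
  · rw [hcj, decide_eq_true_iff]
    exact ⟨j % (n + l), Nat.mod_lt _ (by omega), by rw [h1], by rw [hcr]; exact hcj⟩
  · have hcf : perF c j = false := by cases h : perF c j <;> simp_all
    rw [hcf, decide_eq_false_iff_not]
    rintro ⟨j', hj', hpj', hcj'⟩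
    rw [h1] at hpj'
    have : j' = j % (n + l) := (pos_mono (perF c)).injective hpj'
    rw [this, hcr, hcf] at hcj'
    cases hcj'

lemma E_interior (hn : 1 ≤ n) (hl : 1 ≤ l) (hccnt : acnt (perF c) (n + l) = n)
    (j i : ℕ) (h1 : pos (perF c) j < i) (h2 : i < pos (perF c) (j+1)) :
    perF (EmapF n l c) i = false := by
  have hN0 : 0 < n + 2 * l := by omega
  have hle := pos_succ_le (perF c) j
  have hi : i = pos (perF c) j + 1 := by omega
  have hcj : perF c j = false := by
    cases h : perF c j
    · rfl
    · rw [pos_succ, h] at h2; simp at h2; omega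
  subst hi
  obtain ⟨hmod, hlt⟩ := pos_mod c hn hl hccnt j
  have hrlt : j % (n + l) < n + l := Nat.mod_lt _ (by omega)
  have hcr : perF c (j % (n + l)) = false := by rw [perF_mod c j]; exact hcj
  have hsucc : pos (perF c) (j % (n + l) + 1) = pos (perF c) (j % (n + l)) + 2 := by
    rw [pos_succ, hcr]
    rfl
  have hmono : pos (perF c) (j % (n + l) + 1) ≤ pos (perF c) (n + l) :=
    (pos_mono (perF c)).monotone (by omega)
  rw [posM c hn hl hccnt] at hmono
  have hprN : pos (perF c) (j % (n + l)) + 1 < n + 2 * l := by omega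
  have hmodeq : (pos (perF c) j + 1) % (n + 2 * l) = pos (perF c) (j % (n + l)) + 1 := by
    conv_lhs => rw [← Nat.mod_add_mod]
    rw [hmod, Nat.mod_eq_of_lt hprN]
  rw [perF_eq hN0]
  show decide (∃ j', j' < n + l ∧ pos (perF c) j' = (pos (perF c) j + 1) % (n + 2 * l)
    ∧ perF c j' = true) = false
  rw [decide_eq_false_iff_not]
  rintro ⟨j', hj', hpj', hcj'⟩
  rw [hmodeq] at hpj'
  rcases le_or_gt j' (j % (n + l)) with h | h
  · have : pos (perF c) j' ≤ pos (perF c) (j % (n + l)) := (pos_mono (perF c)).monotone h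
    omega
  · have : pos (perF c) (j % (n + l) + 1) ≤ pos (perF c) j' := (pos_mono (perF c)).monotone h
    omega

lemma E_zero (hn : 1 ≤ n) (hl : 1 ≤ l) (hc0 : perF c 0 = true) :
    EmapF n l c ⟨0, Nat.lt_of_lt_of_le hn (Nat.le_add_right n (2 * l))⟩ = true := by
  apply decide_eq_true
  exact ⟨0, by omega, rfl, hc0⟩

lemma E_gap (hn : 1 ≤ n) (hl : 1 ≤ l) (hc0 : perF c 0 = true)
    (hccnt : acnt (perF c) (n + l) = n) :
    ∀ i k : ℕ, perF (EmapF n l c) i = true → 0 < k →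
      (∀ m, 0 < m → m < k → perF (EmapF n l c) (i + m) = false) →
      perF (EmapF n l c) (i + k) = true → Odd k := by
  classical
  intro i k hi hk hint hend
  obtain ⟨j1, hj1a, hj1b⟩ := pos_cover (perF c) i
  have hij1 : pos (perF c) j1 = i := by
    rcases eq_or_lt_of_le hj1a with h | h
    · exact h
    · exfalso
      have := E_interior c hn hl hccnt j1 i h hj1b
      rw [hi] at this; cases this
  have hcj1 : perF c j1 = true := by
    rw [← E_eval c hn hl hccnt j1, hij1]; exact hi
  have hex2 : ∃ j, j1 < j ∧ perF c j = true :=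
    ⟨j1 + (n + l), by omega, by rw [perF_period]; exact hcj1⟩
  obtain ⟨hj2gt, hcj2⟩ := Nat.find_spec hex2
  set j2 := Nat.find hex2 with hj2def
  have hmin2 : ∀ j, j1 < j → j < j2 → perF c j = false := by
    intro j hja hjb
    cases h : perF c j
    · rfl
    · have : j2 ≤ j := Nat.find_le ⟨hja, h⟩
      omega
  have hd : 0 < j2 - j1 := by omega
  have hposg : pos (perF c) j2 = pos (perF c) j1 + (2 * (j2 - j1) - 1) := by
    have := pos_gap (perF c) j1 hcj1 (j2 - j1) hd
      (fun m hm1 hm2 => hmin2 (j1 + m) (by omega) (by omega))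
    rwa [show j1 + (j2 - j1) = j2 by omega] at this
  set g := 2 * (j2 - j1) - 1 with hgdef
  have hbg : perF (EmapF n l c) (i + g) = true := by
    rw [show i + g = pos (perF c) j2 by omega, E_eval c hn hl hccnt j2]
    exact hcj2
  have hbint : ∀ m, 0 < m → m < g → perF (EmapF n l c) (i + m) = false := by
    intro m hm1 hm2
    have hlt2 : i + m < pos (perF c) j2 := by omega
    obtain ⟨j, hja, hjb⟩ := pos_cover (perF c) (i + m)
    have hjge : j1 ≤ j := by
      by_contra h
      push_neg at h
      have : pos (perF c) (j + 1) ≤ pos (perF c) j1 := (pos_mono (perF c)).monotone (by omega)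
      omega
    have hjlt : j < j2 := by
      by_contra h
      push_neg at h
      have : pos (perF c) j2 ≤ pos (perF c) j := (pos_mono (perF c)).monotone h
      omega
    rcases eq_or_lt_of_le hja with h | h
    · have hjgt : j1 < j := by
        rcases eq_or_lt_of_le hjge with hh | hh
        · exfalso; rw [← hh] at h; omega
        · exact hh
      have hf : perF c j = false := hmin2 j hjgt hjlt
      rw [show i + m = pos (perF c) j from h.symm, E_eval c hn hl hccnt j]
      exact hf
    · exact E_interior c hn hl hccnt j (i + m) h hjb
  have hg0 : 0 < g := by omega
  have hkg : k = g := by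
    rcases lt_trichotomy k g with h | h | h
    · have := hbint k hk h
      rw [hend] at this; cases this
    · exact h
    · have := hint g hg0 h
      rw [hbg] at this; cases this
  rw [hkg, hgdef, Nat.odd_iff]
  omega

lemma E_count (hn : 1 ≤ n) (hl : 1 ≤ l) (hccnt : acnt (perF c) (n + l) = n) :
    (Finset.univ.filter fun i : Fin (n + 2 * l) => EmapF n l c i = true).card
      = (Finset.univ.filter fun j : Fin (n + l) => c j = true).card := by
  symm
  have hpM := posM c hn hl hccnt
  have hlt : ∀ j : Fin (n + l), pos (perF c) j.1 < n + 2 * l := by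
    intro j
    have := pos_mono (perF c) j.isLt
    omega
  apply Finset.card_bij (i := fun j _ => (⟨pos (perF c) j.1, hlt j⟩ : Fin (n + 2 * l)))
  · intro j hj
    rw [Finset.mem_filter] at hj ⊢
    refine ⟨Finset.mem_univ _, ?_⟩
    apply decide_eq_true
    refine ⟨j.1, j.isLt, rfl, ?_⟩
    rw [perF_lt c j.isLt]
    simpa using hj.2
  · intro j1 _ j2 _ h
    have := congrArg Fin.val h
    simp only at this
    exact Fin.ext ((pos_mono (perF c)).injective this)
  · intro i hi
    rw [Finset.mem_filter] at hi
    have := of_decide_eq_true hi.2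
    obtain ⟨j, hj, hpj, hcj⟩ := this
    refine ⟨⟨j, hj⟩, ?_, ?_⟩
    · rw [Finset.mem_filter]
      refine ⟨Finset.mem_univ _, ?_⟩
      rw [← perF_lt c hj]
      exact hcj
    · exact Fin.ext hpj

end Exp

def DmapF (n l : ℕ) (a : Fin (n + 2 * l) → Bool) : Fin (n + l) → Bool :=
  fun j => perF a (tp (perF a) j.1)

/-- generic conversion between `Fin` filter cards and `acnt`. -/
lemma filter_card (K : ℕ) (f : Fin K → Bool) (g : ℕ → Bool)
    (hg : ∀ (m : ℕ) (hm : m < K), g m = f ⟨m, hm⟩) :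
    (Finset.univ.filter fun i => f i = true).card = acnt g K := by
  unfold acnt
  apply Finset.card_bij (i := fun (i : Fin K) _ => i.1)
  · intro i hi
    rw [Finset.mem_filter] at hi ⊢
    refine ⟨Finset.mem_range.2 i.isLt, ?_⟩
    rw [hg i.1 i.isLt]
    simpa using hi.2
  · intro i1 _ i2 _ h
    exact Fin.ext h
  · intro m hm
    rw [Finset.mem_filter, Finset.mem_range] at hm
    refine ⟨⟨m, hm.1⟩, ?_, rfl⟩
    rw [Finset.mem_filter]
    refine ⟨Finset.mem_univ _, ?_⟩
    rw [← hg m hm.1]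
    exact hm.2

section Dside
variable {n l : ℕ} (a : Fin (n + 2 * l) → Bool)

lemma tpM (hn : 1 ≤ n) (hl : 1 ≤ l) (hb0 : perF a 0 = true)
    (hGO : ∀ i k, perF a i = true → 0 < k →
      (∀ m, 0 < m → m < k → perF a (i + m) = false) →
      perF a (i + k) = true → Odd k)
    (hacnt : acnt (perF a) (n + 2 * l) = n) :
    tp (perF a) (n + l) = n + 2 * l ∧
      acnt (fun m => perF a (tp (perF a) m)) (n + l) = n := by
  have hN : 0 < n + 2 * l := by omega
  obtain ⟨J, hJ0, hJN⟩ := tp_hits hN (perF_period a) hGO hb0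
  have HP := tp_pair hN (perF_period a) hGO hb0
  have h1 := acnt_tp HP J
  rw [hJN, hacnt] at h1
  have h2 : pos (fun m => perF a (tp (perF a) m)) J
      + acnt (fun m => perF a (tp (perF a) m)) J = 2 * J :=
    pos_add_count _ J
  rw [pos_tp, hJN] at h2
  have hJ : J = n + l := by omega
  rw [hJ] at hJN h1
  exact ⟨hJN, h1.symm⟩

lemma D_zero (hn : 1 ≤ n) (hl : 1 ≤ l) (hb0 : perF a 0 = true) :
    DmapF n l a ⟨0, by omega⟩ = true := by
  show perF a (tp (perF a) 0) = true
  rw [tp_zero]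
  exact hb0

lemma D_count (hn : 1 ≤ n) (hl : 1 ≤ l) (hb0 : perF a 0 = true)
    (hGO : ∀ i k, perF a i = true → 0 < k →
      (∀ m, 0 < m → m < k → perF a (i + m) = false) →
      perF a (i + k) = true → Odd k)
    (hacnt : acnt (perF a) (n + 2 * l) = n) :
    (Finset.univ.filter fun j : Fin (n + l) => DmapF n l a j = true).card = n := by
  rw [filter_card (n + l) (DmapF n l a) (fun m => perF a (tp (perF a) m))
    (fun m hm => rfl)]
  exact (tpM a hn hl hb0 hGO hacnt).2

lemma D_acnt (hn : 1 ≤ n) (hl : 1 ≤ l)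
    (hcnt : acnt (fun m => perF a (tp (perF a) m)) (n + l) = n) :
    acnt (perF (DmapF n l a)) (n + l) = n := by
  have heq : acnt (perF (DmapF n l a)) (n + l)
      = acnt (fun m => perF a (tp (perF a) m)) (n + l) := by
    unfold acnt
    congr 1
    apply Finset.filter_congr
    intro m hm
    rw [Finset.mem_range] at hm
    simp only []
    rw [perF_lt _ hm]
    rfl
  rw [heq]
  exact hcnt

lemma DE_aux (hn : 1 ≤ n) (hl : 1 ≤ l) (c : Fin (n + l) → Bool)
    (hccnt : acnt (perF c) (n + l) = n) (j : ℕ) :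
    tp (perF (EmapF n l c)) j = pos (perF c) j := by
  induction j with
  | zero => rfl
  | succ j ih =>
    rw [tp_succ, ih, E_eval c hn hl hccnt j, pos_succ]

lemma DE (hn : 1 ≤ n) (hl : 1 ≤ l) (c : Fin (n + l) → Bool)
    (hccnt : acnt (perF c) (n + l) = n) :
    DmapF n l (EmapF n l c) = c := by
  funext j
  show perF (EmapF n l c) (tp (perF (EmapF n l c)) j.1) = c j
  rw [DE_aux hn hl c hccnt, E_eval c hn hl hccnt, perF_lt c j.isLt]

lemma ED (hn : 1 ≤ n) (hl : 1 ≤ l) (hb0 : perF a 0 = true)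
    (hGO : ∀ i k, perF a i = true → 0 < k →
      (∀ m, 0 < m → m < k → perF a (i + m) = false) →
      perF a (i + k) = true → Odd k)
    (hacnt : acnt (perF a) (n + 2 * l) = n) :
    EmapF n l (DmapF n l a) = a := by
  classical
  have hN : 0 < n + 2 * l := by omega
  have HP := tp_pair hN (perF_period a) hGO hb0
  obtain ⟨htM, hcnt⟩ := tpM a hn hl hb0 hGO hacnt
  have hc' : ∀ (m : ℕ), m < n + l → perF (DmapF n l a) m = perF a (tp (perF a) m) := by
    intro m hm
    rw [perF_lt _ hm]
    rfl
  have hpos : ∀ j, j ≤ n + l → pos (perF (DmapF n l a)) j = tp (perF a) j := by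
    intro j
    induction j with
    | zero => intro _; rfl
    | succ j ih =>
      intro hj
      rw [pos_succ, ih (by omega), hc' j (by omega), tp_succ]
  funext i
  have hbi : perF a i.1 = a i := by rw [perF_lt a i.isLt]
  show decide (∃ j, j < n + l ∧ pos (perF (DmapF n l a)) j = i.1
      ∧ perF (DmapF n l a) j = true) = a i
  cases hai : a i
  · rw [decide_eq_false_iff_not]
    rintro ⟨j, hjM, hpj, hcj⟩
    rw [hpos j (by omega)] at hpj
    rw [hc' j hjM, hpj, hbi, hai] at hcj
    cases hcj
  · rw [decide_eq_true_iff]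
    obtain ⟨j, hja, hjb⟩ := pos_cover (fun m => perF a (tp (perF a) m)) i.1
    rw [pos_tp] at hja hjb
    have hjM : j < n + l := by
      by_contra h
      push_neg at h
      have : tp (perF a) (n + l) ≤ tp (perF a) j := (tp_mono (perF a)).monotone h
      have hi := i.isLt
      omega
    have hti : tp (perF a) j = i.1 := by
      rcases eq_or_lt_of_le hja with h | h
      · exact h
      · exfalso
        have hbt : perF a (tp (perF a) j) = false := by
          cases hh : perF a (tp (perF a) j)
          · rfl
          · rw [tp_succ, hh] at hjb
            simp at hjb
            omega
        have hp1 := HP j hbt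
        have hstep : tp (perF a) (j + 1) = tp (perF a) j + 2 := by
          rw [tp_succ, hbt]
          rfl
        have hi1 : i.1 = tp (perF a) j + 1 := by omega
        rw [← hi1] at hp1
        rw [hbi, hai] at hp1
        cases hp1
    refine ⟨j, hjM, ?_, ?_⟩
    · rw [hpos j (by omega)]; exact hti
    · rw [hc' j hjM, hti, hbi, hai]

end Dside

lemma GO_of_cond {n l : ℕ} (hn : 1 ≤ n) (hl : 1 ≤ l) (a : Fin (n + 2 * l) → Bool)
    (h : ∀ i : Fin (n + 2 * l), a i = true →
        ∀ k : ℕ, 0 < k →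
          (∀ m : ℕ, 0 < m → m < k →
            a ⟨(i.1 + m) % (n + 2 * l), Nat.mod_lt _ (Nat.lt_of_lt_of_le hn (Nat.le_add_right n (2 * l)))⟩ = false) →
          a ⟨(i.1 + k) % (n + 2 * l), Nat.mod_lt _ (Nat.lt_of_lt_of_le hn (Nat.le_add_right n (2 * l)))⟩ = true →
          Odd k) :
    ∀ i k, perF a i = true → 0 < k → (∀ m, 0 < m → m < k → perF a (i + m) = false) →
      perF a (i + k) = true → Odd k := by
  intro i k hi hk hint hend
  have hN : 0 < n + 2 * l := by omega
  refine h ⟨i % (n + 2 * l), Nat.mod_lt _ hN⟩ ?_ k hk ?_ ?_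
  · have hgoal := hi
    rw [perF_eq hN a i] at hgoal
    exact hgoal
  · intro m hm1 hm2
    have hgoal : perF a (i % (n + 2 * l) + m) = false := by
      rw [perF_congr_mod a (Nat.mod_add_mod i (n + 2 * l) m)]
      exact hint m hm1 hm2
    rw [perF_eq hN] at hgoal
    exact hgoal
  · have hgoal : perF a (i % (n + 2 * l) + k) = false → True := fun _ => trivial
    have hgoal2 : perF a (i % (n + 2 * l) + k) = true := by
      rw [perF_congr_mod a (Nat.mod_add_mod i (n + 2 * l) k)]
      exact hend
    rw [perF_eq hN] at hgoal2
    exact hgoal2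

lemma cond_of_GO {n l : ℕ} (hn : 1 ≤ n) (hl : 1 ≤ l) (a : Fin (n + 2 * l) → Bool)
    (h : ∀ i k, perF a i = true → 0 < k →
      (∀ m, 0 < m → m < k → perF a (i + m) = false) →
      perF a (i + k) = true → Odd k) :
    ∀ i : Fin (n + 2 * l), a i = true →
        ∀ k : ℕ, 0 < k →
          (∀ m : ℕ, 0 < m → m < k →
            a ⟨(i.1 + m) % (n + 2 * l), Nat.mod_lt _ (Nat.lt_of_lt_of_le hn (Nat.le_add_right n (2 * l)))⟩ = false) →
          a ⟨(i.1 + k) % (n + 2 * l), Nat.mod_lt _ (Nat.lt_of_lt_of_le hn (Nat.le_add_right n (2 * l)))⟩ = true →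
          Odd k := by
  intro i hi k hk hint hend
  have hN : 0 < n + 2 * l := by omega
  refine h i.1 k ?_ hk ?_ ?_
  · rw [perF_lt a i.isLt, Fin.eta]
    exact hi
  · intro m hm1 hm2
    rw [perF_eq hN]
    exact hint m hm1 hm2
  · rw [perF_eq hN]
    exact hend

lemma T_card (n l : ℕ) (hn : 1 ≤ n) (hl : 1 ≤ l)
    (s : Finset (Fin (n + l) → Bool))
    (hs : ∀ c, c ∈ s ↔ (c ⟨0, by omega⟩ = true ∧
      (Finset.univ.filter fun j => c j = true).card = n)) :
    s.card = Nat.choose (n + l - 1) (n - 1) := by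
  classical
  set z : Fin (n + l) := ⟨0, by omega⟩ with hz
  have hcard : (Finset.univ.erase z).card = n + l - 1 := by
    rw [Finset.card_erase_of_mem (Finset.mem_univ z)]
    simp
  rw [show Nat.choose (n + l - 1) (n - 1)
      = (Finset.powersetCard (n - 1) (Finset.univ.erase z)).card by
    rw [Finset.card_powersetCard, hcard]]
  have hfil : ∀ t : Finset (Fin (n + l)),
      (Finset.univ.filter fun j => decide (j = z ∨ j ∈ t) = true) = insert z t := by
    intro t
    ext j
    simp only [Finset.mem_filter, Finset.mem_univ, true_and, decide_eq_true_eq,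
      Finset.mem_insert]
  apply Finset.card_bij'
    (i := fun c _ => (Finset.univ.filter fun j => c j = true).erase z)
    (j := fun t _ => fun j => decide (j = z ∨ j ∈ t))
  · intro c hc
    rw [hs] at hc
    rw [Finset.mem_powersetCard]
    constructor
    · exact Finset.erase_subset_erase _ (Finset.filter_subset _ _)
    · have hzmem : z ∈ Finset.univ.filter (fun j => c j = true) :=
        Finset.mem_filter.2 ⟨Finset.mem_univ _, hc.1⟩
      rw [Finset.card_erase_of_mem hzmem, hc.2]
  · intro t ht
    rw [Finset.mem_powersetCard] at ht
    have hznt : z ∉ t := fun hzt => (Finset.mem_erase.1 (ht.1 hzt)).1 rfl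
    rw [hs]
    constructor
    · simp
    · rw [hfil t, Finset.card_insert_of_notMem hznt, ht.2]
      omega
  · intro c hc
    rw [hs] at hc
    funext j
    by_cases hj : j = z
    · subst hj
      simp [hc.1]
    · cases hcj : c j
      · apply decide_eq_false
        rintro (h | h)
        · exact hj h
        · rw [Finset.mem_erase, Finset.mem_filter] at h
          rw [h.2.2] at hcj
          cases hcj
      · apply decide_eq_true
        right
        rw [Finset.mem_erase, Finset.mem_filter]
        exact ⟨hj, Finset.mem_univ _, hcj⟩
  · intro t ht
    rw [Finset.mem_powersetCard] at ht
    have hznt : z ∉ t := fun hzt => (Finset.mem_erase.1 (ht.1 hzt)).1 rfl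
    rw [hfil t, Finset.erase_insert hznt]


end Stmt11Aux

open Stmt11Aux in
theorem stmt_11 (n l : ℕ) (hn : 1 ≤ n) (hl : 1 ≤ l) :
    Set.ncard {a : Fin (n + 2 * l) → Bool |
      a ⟨0, by omega⟩ = true ∧
      (Finset.univ.filter (fun i => a i = true)).card = n ∧
      -- every maximal cyclic run of 0's has even length: equivalently, for each
      -- index `i` with `a i = true`, the distance `k` to the next `true` entry
      -- (cyclically) is odd, i.e. the gap of 0's between them has even length
      (∀ i : Fin (n + 2 * l), a i = true →
        ∀ k : ℕ, 0 < k →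
          (∀ m : ℕ, 0 < m → m < k →
            a ⟨(i.1 + m) % (n + 2 * l), Nat.mod_lt _ (by omega)⟩ = false) →
          a ⟨(i.1 + k) % (n + 2 * l), Nat.mod_lt _ (by omega)⟩ = true →
          Odd k)} = Nat.choose (n + l - 1) (n - 1) := by
  classical
  have hS : ({a : Fin (n + 2 * l) → Bool |
      a ⟨0, by omega⟩ = true ∧
      (Finset.univ.filter (fun i => a i = true)).card = n ∧
      (∀ i : Fin (n + 2 * l), a i = true →
        ∀ k : ℕ, 0 < k →
          (∀ m : ℕ, 0 < m → m < k →
            a ⟨(i.1 + m) % (n + 2 * l), Nat.mod_lt _ (by omega)⟩ = false) →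
          a ⟨(i.1 + k) % (n + 2 * l), Nat.mod_lt _ (by omega)⟩ = true →
          Odd k)} : Set (Fin (n + 2 * l) → Bool)).Finite := Set.toFinite _
  have hT : ({c : Fin (n + l) → Bool | c ⟨0, by omega⟩ = true ∧
      (Finset.univ.filter fun j => c j = true).card = n} :
      Set (Fin (n + l) → Bool)).Finite := Set.toFinite _
  rw [Set.ncard_eq_toFinset_card _ hS]
  have key : hS.toFinset.card = hT.toFinset.card := by
    apply Finset.card_bij' (i := fun a _ => DmapF n l a) (j := fun c _ => EmapF n l c)
    · intro a ha
      rw [Set.Finite.mem_toFinset, Set.mem_setOf_eq] at ha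
      obtain ⟨h0, hcnt, hcond⟩ := ha
      have hb0 : perF a 0 = true := by
        rw [perF_lt a (show (0:ℕ) < n + 2 * l by omega)]
        exact h0
      have hGO := GO_of_cond hn hl a hcond
      have hacnt : acnt (perF a) (n + 2 * l) = n :=
        (filter_card _ a (perF a) (fun m hm => perF_lt a hm)).symm.trans hcnt
      rw [Set.Finite.mem_toFinset, Set.mem_setOf_eq]
      exact ⟨D_zero a hn hl hb0, D_count a hn hl hb0 hGO hacnt⟩
    · intro c hc
      rw [Set.Finite.mem_toFinset, Set.mem_setOf_eq] at hc
      obtain ⟨h0, hcnt⟩ := hc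
      have hc0 : perF c 0 = true := by
        rw [perF_lt c (show (0:ℕ) < n + l by omega)]
        exact h0
      have hccnt : acnt (perF c) (n + l) = n :=
        (filter_card _ c (perF c) (fun m hm => perF_lt c hm)).symm.trans hcnt
      rw [Set.Finite.mem_toFinset, Set.mem_setOf_eq]
      refine ⟨E_zero c hn hl hc0, ?_, ?_⟩
      · rw [E_count c hn hl hccnt]
        exact hcnt
      · exact cond_of_GO hn hl _ (E_gap c hn hl hc0 hccnt)
    · intro a ha
      rw [Set.Finite.mem_toFinset, Set.mem_setOf_eq] at ha
      obtain ⟨h0, hcnt, hcond⟩ := ha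
      have hb0 : perF a 0 = true := by
        rw [perF_lt a (show (0:ℕ) < n + 2 * l by omega)]
        exact h0
      have hGO := GO_of_cond hn hl a hcond
      have hacnt : acnt (perF a) (n + 2 * l) = n :=
        (filter_card _ a (perF a) (fun m hm => perF_lt a hm)).symm.trans hcnt
      exact ED a hn hl hb0 hGO hacnt
    · intro c hc
      rw [Set.Finite.mem_toFinset, Set.mem_setOf_eq] at hc
      obtain ⟨h0, hcnt⟩ := hc
      have hccnt : acnt (perF c) (n + l) = n :=
        (filter_card _ c (perF c) (fun m hm => perF_lt c hm)).symm.trans hcnt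
      exact DE hn hl c hccnt
  rw [key]
  apply T_card n l hn hl
  intro c
  rw [Set.Finite.mem_toFinset, Set.mem_setOf_eq]
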